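/- Let V be a vector space over ℚ, let D : V → V be a ℚ-linear map, and let f, F₀ ∈ V satisfy D²F₀ = f. In the module V⟦ħ⟧ of formal power series with coefficients in V, define the operators e^{±ħD} = ∑_{k≥0} (±1)^k·ħ^k·D^k/k! (acting coefficientwise). Then (e^{ħD} − 2 + e^{−ħD})·(F₀ − ∑_{n≥0} (B_{n+2}/((n+2)·n!))·ħ^{n+2}·D^n f) = ħ²·f, where B_n denotes the n-th Bernoulli number, defined by w/(e^w − 1) = ∑_{n≥0} B_n·w^n/n!. -/

import Mathlib

open PowerSeries Finset

noncomputable section BernAux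

/-- coefficients of `e^w - 2 + e^{-w}` -/
def acoef (k : ℕ) : ℚ :=
  (1 + (-1 : ℚ) ^ k) / k.factorial - (if k = 0 then 2 else 0)

/-- coefficients of `w/(e^w-1) - w·(w/(e^w-1))'` -/
def phicoef (m : ℕ) : ℚ := (1 - (m : ℚ)) * bernoulli m / m.factorial

private lemma derivative_exp : d⁄dX ℚ (exp ℚ) = exp ℚ := by
  ext n
  rw [coeff_derivative, coeff_exp, coeff_exp]
  simp only [Algebra.algebraMap_self_apply, Nat.factorial_succ]
  have h1 : ((n.factorial : ℚ)) ≠ 0 := by exact_mod_cast n.factorial_ne_zero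
  have h2 : ((n : ℚ) + 1) ≠ 0 := by positivity
  push_cast
  field_simp

private lemma key_ps :
    (exp ℚ - 2 + evalNegHom (exp ℚ)) *
      (bernoulliPowerSeries ℚ - X * d⁄dX ℚ (bernoulliPowerSeries ℚ)) = X ^ 2 := by
  set E := exp ℚ with hE
  set N := evalNegHom (exp ℚ) with hNdef
  set B := bernoulliPowerSeries ℚ with hB
  set dB := d⁄dX ℚ B with hdB
  have h1 : B * (E - 1) = X := bernoulliPowerSeries_mul_exp_sub_one ℚ
  have hN : E * N = 1 := exp_mul_exp_neg_eq_one (A := ℚ)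
  have h2 : dB * (E - 1) + B * E = 1 := by
    have hd := congrArg (d⁄dX ℚ) h1
    rw [Derivation.leibniz, derivative_X] at hd
    rw [map_sub, Derivation.map_one_eq_zero, hE, _root_.derivative_exp, sub_zero,
      smul_eq_mul, smul_eq_mul, ← hdB] at hd
    linear_combination hd
  linear_combination (N * (E - 1 + X * E)) * h1 - (N * X * (E - 1)) * h2 +
    (X ^ 2 - (E - 2) * (B - X * dB)) * hN

private lemma coeff_A (k : ℕ) :
    coeff k (exp ℚ - 2 + evalNegHom (exp ℚ)) = acoef k := by
  rw [map_add, map_sub, coeff_exp]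
  have : (evalNegHom (exp ℚ)) = rescale (-1 : ℚ) (exp ℚ) := rfl
  rw [this, coeff_rescale, coeff_exp]
  have h2 : (coeff k (2 : ℚ⟦X⟧)) = if k = 0 then 2 else 0 := by
    have : (2 : ℚ⟦X⟧) = C 2 := (map_ofNat C 2).symm
    rw [this, coeff_C]
  rw [h2]
  simp only [Algebra.algebraMap_self_apply, acoef]
  ring

private lemma coeff_Phi (m : ℕ) :
    coeff m (bernoulliPowerSeries ℚ - X * d⁄dX ℚ (bernoulliPowerSeries ℚ)) = phicoef m := by
  rw [map_sub]
  have hB : ∀ j, coeff j (bernoulliPowerSeries ℚ) = bernoulli j / j.factorial := by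
    intro j; simp [bernoulliPowerSeries, coeff_mk]
  cases m with
  | zero =>
      simp [phicoef, bernoulliPowerSeries, hB]
  | succ n =>
      rw [coeff_succ_X_mul, coeff_derivative, hB]
      simp only [phicoef, Nat.factorial_succ]
      have h1 : ((n.factorial : ℚ)) ≠ 0 := by exact_mod_cast n.factorial_ne_zero
      have h2 : ((n : ℚ) + 1) ≠ 0 := by positivity
      push_cast
      field_simp

private lemma scalar_identity (n : ℕ) :
    ∑ k ∈ range (n + 1), acoef k * phicoef (n - k) = if n = 2 then 1 else 0 := by
  have h := congrArg (coeff n) key_ps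
  rw [coeff_mul, Finset.Nat.sum_antidiagonal_eq_sum_range_succ_mk, coeff_X_pow] at h
  rw [← h]
  apply Finset.sum_congr rfl
  intro k _
  rw [coeff_A, coeff_Phi]

end BernAux


/-- The coefficientwise action of the operator `e^{cℏD} = ∑_k cᵏ ℏᵏ Dᵏ/k!` on a formal
power series `∑_n ℏⁿ F n` with coefficients in a `ℚ`-vector space `V`: the `n`-th
coefficient of the result is `∑_{k≤n} (cᵏ/k!) • Dᵏ (F (n−k))`. -/
noncomputable def expOp {V : Type*} [AddCommGroup V] [Module ℚ V]
    (D : V →ₗ[ℚ] V) (c : ℚ) (F : ℕ → V) : ℕ → V :=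
  fun n => ∑ k ∈ Finset.range (n + 1), (c ^ k / (k.factorial : ℚ)) • (D ^ k) (F (n - k))

/-- The coefficients of the series `F₀ − ∑_{n≥0} (B_{n+2}/((n+2)·n!))·ℏ^{n+2}·Dⁿ f`:
`F₀` at `ℏ⁰`, `0` at `ℏ¹`, and `−(B_k/(k·(k−2)!)) • D^{k−2} f` at `ℏᵏ` for `k ≥ 2`. -/
noncomputable def bernoulliNumSeries {V : Type*} [AddCommGroup V] [Module ℚ V]
    (D : V →ₗ[ℚ] V) (f F₀ : V) : ℕ → V :=
  fun k => if k = 0 then F₀ else if 2 ≤ k then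
    -((bernoulli k : ℚ) / ((k : ℚ) * ((k - 2).factorial : ℚ))) • (D ^ (k - 2)) f
  else 0

/-- Let `V` be a `ℚ`-vector space, `D : V → V` linear, and `f, F₀ ∈ V`
with `D²F₀ = f`.  Then in `V⟦ℏ⟧` (with `e^{±ℏD}` acting coefficientwise):
`(e^{ℏD} − 2 + e^{−ℏD})·(F₀ − ∑_{n≥0} (B_{n+2}/((n+2)·n!))·ℏ^{n+2}·Dⁿ f) = ℏ²·f`,
where `B_n` is the `n`-th Bernoulli number. -/
theorem second_difference_inverse_formula {V : Type*} [AddCommGroup V] [Module ℚ V]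
    (D : V →ₗ[ℚ] V) (f F₀ : V) (h : D (D F₀) = f) :
    ∀ n : ℕ,
      expOp D 1 (bernoulliNumSeries D f F₀) n
        - (2 : ℚ) • bernoulliNumSeries D f F₀ n
        + expOp D (-1) (bernoulliNumSeries D f F₀) n
      = if n = 2 then f else 0 := by
  intro n
  classical
  set G := bernoulliNumSeries D f F₀ with hG
  have hsum : expOp D 1 G n - (2:ℚ) • G n + expOp D (-1) G n
      = ∑ k ∈ range (n+1), acoef k • (D ^ k) (G (n - k)) := by
    unfold expOp
    have h2 : (2:ℚ) • G n
        = ∑ k ∈ range (n+1), (if k = 0 then (2:ℚ) else 0) • (D ^ k) (G (n - k)) := by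
      rw [Finset.sum_eq_single 0]
      · simp
      · intro b _ hb; simp [hb]
      · intro habs; simp at habs
    rw [h2, ← Finset.sum_sub_distrib, ← Finset.sum_add_distrib]
    apply Finset.sum_congr rfl
    intro k _
    have ha : acoef k = (1:ℚ)^k / k.factorial - (if k = 0 then (2:ℚ) else 0)
        + (-1:ℚ)^k / k.factorial := by
      simp only [acoef]; split_ifs <;> ring
    rw [ha, add_smul, sub_smul]
  rw [hsum]
  match n with
  | 0 => norm_num [acoef]
  | 1 =>
      norm_num [Finset.sum_range_succ, acoef]
  | (p+2) =>
      have hterm : ∀ k ∈ range (p+2+1),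
          (D ^ k) (G (p+2 - k)) = phicoef (p+2-k) • (D ^ p) f := by
        intro k hk
        rw [Finset.mem_range] at hk
        have hkle : k ≤ p + 2 := Nat.lt_succ_iff.mp hk
        rcases hm : p + 2 - k with _ | _ | j
        · -- p + 2 - k = 0, so k = p + 2
          have hkeq : k = p + 2 := le_antisymm hkle (Nat.le_of_sub_eq_zero hm)
          have hG0 : G 0 = F₀ := by simp [hG, bernoulliNumSeries]
          rw [hG0, hkeq, phicoef]
          have : (D ^ (p+2)) F₀ = (D ^ p) ((D ^ 2) F₀) := by
            rw [← Module.End.mul_apply, ← pow_add]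
          rw [this]
          have hD2 : (D ^ 2) F₀ = f := by
            rw [pow_two, Module.End.mul_apply, h]
          rw [hD2]
          norm_num
        · -- p + 2 - k = 1
          have hG1 : G 1 = 0 := by simp [hG, bernoulliNumSeries]
          rw [hG1, map_zero, phicoef]
          norm_num
        · -- p + 2 - k = j + 2
          have hkj : k + j = p := by omega
          have hGj : G (j+2) = -((bernoulli (j+2) : ℚ) /
              ((j+2 : ℕ) * (j.factorial : ℚ))) • (D ^ j) f := by
            simp [hG, bernoulliNumSeries]
          rw [hGj, map_smul]
          have hDD : (D ^ k) ((D ^ j) f) = (D ^ p) f := by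
            rw [← Module.End.mul_apply, ← pow_add, hkj]
          rw [hDD]
          congr 1
          have hfac : ((j+2).factorial : ℚ) = (j+2) * (j+1) * j.factorial := by
            rw [Nat.factorial_succ, Nat.factorial_succ]; push_cast; ring
          have h1 : ((j.factorial : ℚ)) ≠ 0 := by exact_mod_cast j.factorial_ne_zero
          have h2 : ((j:ℚ) + 2) ≠ 0 := by positivity
          have h3 : ((j:ℚ) + 1) ≠ 0 := by positivity
          simp only [phicoef, hfac]
          push_cast
          field_simp
          ring
      calc ∑ k ∈ range (p+2+1), acoef k • (D ^ k) (G (p+2 - k))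
          = ∑ k ∈ range (p+2+1), (acoef k * phicoef (p+2-k)) • (D ^ p) f := by
            apply Finset.sum_congr rfl
            intro k hk
            rw [hterm k hk, smul_smul]
        _ = (∑ k ∈ range (p+2+1), acoef k * phicoef (p+2-k)) • (D ^ p) f :=
            (Finset.sum_smul).symm
        _ = (if p + 2 = 2 then (1:ℚ) else 0) • (D ^ p) f := by
            rw [scalar_identity]
        _ = if p + 2 = 2 then f else 0 := by
            by_cases hp : p = 0
            · subst hp; simp
            · have : p + 2 ≠ 2 := by omega
              simp [this, hp]
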